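/- Let M be a monoid, σ : X⁺ → M a surjective semigroup homomorphism from a free semigroup, and τ : X* → M its unique extension to a monoid homomorphism. Then L_σ(M) = L_τ(M) ∩ (X X̂* X̄ ∪ {ε}), where X̂ = X ∪ X̄. -/

import Mathlib

open FreeMonoid

section LoopPrelude

variable {X M : Type*} [Monoid M]

def barW {X : Type*} (w : List (X ⊕ X)) : List (X ⊕ X) := (w.map Sum.swap).reverse

def posW {X : Type*} (u : List X) : List (X ⊕ X) := u.map Sum.inl

def negW {X : Type*} (v : List X) : List (X ⊕ X) := (v.map Sum.inr).reverse

inductive LStep (σ : FreeMonoid X →* M) : M → (X ⊕ X) → M → Prop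
  | posW (a : M) (x : X) : LStep σ a (Sum.inl x) (a * σ (of x))
  | negW (a : M) (x : X) : LStep σ (a * σ (of x)) (Sum.inr x) a

inductive LPath (σ : FreeMonoid X →* M) : M → List (X ⊕ X) → M → Prop
  | nil (a : M) : LPath σ a [] a
  | cons {a b c : M} {l : X ⊕ X} {w : List (X ⊕ X)}
      (h₁ : LStep σ a l b) (h₂ : LPath σ b w c) : LPath σ a (l :: w) c

def LoopProblem (σ : FreeMonoid X →* M) : Set (List (X ⊕ X)) := { w | LPath σ 1 w 1 }

end LoopPrelude

section SemiPrelude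

variable {X S : Type*} [Semigroup S]

def SLoopProblem (f : X → S) : Set (List (X ⊕ X)) :=
  LoopProblem (FreeMonoid.lift (fun x => (f x : WithOne S)))

end SemiPrelude

section Aux

variable {X M N : Type*} [Monoid M] [Monoid N]

lemma lstep_inl {σ : FreeMonoid X →* M} {a b : M} {x : X}
    (h : LStep σ a (Sum.inl x) b) : b = a * σ (of x) := by cases h; rfl

lemma lstep_inr {σ : FreeMonoid X →* M} {a b : M} {x : X}
    (h : LStep σ a (Sum.inr x) b) : a = b * σ (of x) := by cases h; rfl

lemma lstep_map (φ : M →* N) {σ : FreeMonoid X →* M} {a b : M} {l : X ⊕ X}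
    (h : LStep σ a l b) : LStep (φ.comp σ) (φ a) l (φ b) := by
  cases l with
  | inl x =>
    rw [lstep_inl h, map_mul]
    exact LStep.posW (φ a) x
  | inr x =>
    rw [lstep_inr h, map_mul]
    exact LStep.negW (φ b) x

lemma lpath_map (φ : M →* N) {σ : FreeMonoid X →* M} {a b : M} {w : List (X ⊕ X)}
    (h : LPath σ a w b) : LPath (φ.comp σ) (φ a) w (φ b) := by
  induction h with
  | nil a => exact LPath.nil _
  | cons h₁ _ ih => exact LPath.cons (lstep_map φ h₁) ih

lemma lpath_append {σ : FreeMonoid X →* M} {a b c : M} {u v : List (X ⊕ X)}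
    (h₁ : LPath σ a u b) (h₂ : LPath σ b v c) : LPath σ a (u ++ v) c := by
  induction h₁ with
  | nil a => exact h₂
  | cons hs _ ih => exact LPath.cons hs (ih h₂)

lemma lpath_last {σ : FreeMonoid X →* M} {a c : M} {w : List (X ⊕ X)}
    (h : LPath σ a w c) (hw : w ≠ []) :
    ∃ v l b, w = v ++ [l] ∧ LPath σ a v b ∧ LStep σ b l c := by
  induction h with
  | nil a => exact absurd rfl hw
  | @cons a b c l w h₁ h₂ ih =>
    rcases eq_or_ne w [] with rfl | hne
    · cases h₂
      exact ⟨[], l, a, rfl, LPath.nil a, h₁⟩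
    · obtain ⟨v, l', b', hw', hp, hs⟩ := ih hne
      exact ⟨l :: v, l', b', by rw [hw']; rfl, LPath.cons h₁ hp, hs⟩

lemma lpath_append_singleton {σ : FreeMonoid X →* M} {c : M} {l : X ⊕ X} :
    ∀ {v : List (X ⊕ X)} {a : M}, LPath σ a (v ++ [l]) c →
      ∃ b, LPath σ a v b ∧ LStep σ b l c := by
  intro v
  induction v with
  | nil =>
    intro a h
    cases h with
    | cons h₁ h₂ => cases h₂; exact ⟨_, LPath.nil a, h₁⟩
  | cons hd tl ih =>
    intro a h
    cases h with
    | cons h₁ h₂ =>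
      obtain ⟨b, hb, hl⟩ := ih h₂
      exact ⟨b, LPath.cons h₁ hb, hl⟩

lemma mul_coe_ne_one (a : WithOne M) (m : M) : a * (m : WithOne M) ≠ 1 := by
  induction a using WithOne.cases_on
  · simp
  · intro b; rw [← WithOne.coe_mul]; exact WithOne.coe_ne_one

lemma lpath_coe (f : X → M) {a b : M} {w : List (X ⊕ X)}
    (h : LPath (FreeMonoid.lift f) a w b) :
    LPath (FreeMonoid.lift (fun x => (f x : WithOne M))) (a : WithOne M) w (b : WithOne M) := by
  induction h with
  | nil a => exact LPath.nil _
  | @cons a b c l w h₁ _ ih =>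
    refine LPath.cons ?_ ih
    cases l with
    | inl x =>
      rw [show b = a * FreeMonoid.lift f (of x) from lstep_inl h₁, WithOne.coe_mul]
      exact LStep.posW (a : WithOne M) x
    | inr x =>
      rw [show a = b * FreeMonoid.lift f (of x) from lstep_inr h₁, WithOne.coe_mul]
      exact LStep.negW (b : WithOne M) x

end Aux

theorem semigroup_vs_monoid_loop_problem {X M : Type*} [Monoid M] (f : X → M)
    (hf : ∀ m : M, ∃ w : List X, w ≠ [] ∧ FreeMonoid.lift f (FreeMonoid.ofList w) = m) :
    SLoopProblem f = LoopProblem (FreeMonoid.lift f) ∩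
      {w : List (X ⊕ X) |
        (∃ (x y : X) (v : List (X ⊕ X)), w = Sum.inl x :: v ++ [Sum.inr y]) ∨ w = []} := by
  set σ₁ : FreeMonoid X →* WithOne M := FreeMonoid.lift (fun x => (f x : WithOne M)) with hσ₁
  have hσof : ∀ x : X, σ₁ (of x) = ((f x : M) : WithOne M) := fun x => rfl
  set φ : WithOne M →* M := WithOne.lift (MulHom.id M) with hφ
  have hcomp : φ.comp σ₁ = FreeMonoid.lift f := by
    apply FreeMonoid.hom_eq
    intro x
    simp [hσof, hφ]
  ext w
  constructor
  · intro hw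
    have hw' : LPath σ₁ 1 w 1 := hw
    constructor
    · have := lpath_map φ hw'
      rw [hcomp] at this
      simpa [LoopProblem] using this
    · rcases eq_or_ne w [] with rfl | hne
      · exact Or.inr rfl
      · left
        obtain ⟨v, l, b, hwd, hp, hs⟩ := lpath_last hw' hne
        obtain ⟨y, rfl⟩ : ∃ y, l = Sum.inr y := by
          cases l with
          | inl x =>
            have h1 := lstep_inl hs
            exact absurd h1.symm (by simpa [hσof] using mul_coe_ne_one b (f x))
          | inr y => exact ⟨y, rfl⟩
        cases hp with
        | nil =>
          have h1 := lstep_inr hs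
          exact absurd h1.symm (by simpa [hσof] using mul_coe_ne_one b (f y))
        | @cons a b' c' l' v' h₁ h₂ =>
          obtain ⟨x, rfl⟩ : ∃ x, l' = Sum.inl x := by
            cases l' with
            | inl x => exact ⟨x, rfl⟩
            | inr x =>
              have h1 := lstep_inr h₁
              exact absurd h1.symm (by simpa [hσof] using mul_coe_ne_one b' (f x))
          exact ⟨x, y, v', by rw [hwd]⟩
  · rintro ⟨hw, hstruct⟩
    rcases hstruct with ⟨x, y, v, rfl⟩ | rfl
    · have hw' : LPath (FreeMonoid.lift f) 1 (Sum.inl x :: (v ++ [Sum.inr y])) 1 := hw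
      cases hw' with
      | @cons _ b _ _ _ h₁ h₂ =>
        have hb : b = 1 * FreeMonoid.lift f (of x) := lstep_inl h₁
        subst hb
        obtain ⟨b', hp, hs⟩ := lpath_append_singleton h₂
        have hb' : b' = 1 * FreeMonoid.lift f (of y) := lstep_inr hs
        subst hb'
        show LPath σ₁ 1 (Sum.inl x :: (v ++ [Sum.inr y])) 1
        refine LPath.cons (LStep.posW 1 x)
          (lpath_append (b := (((1 : M) * FreeMonoid.lift f (of y) : M) : WithOne M)) ?_ ?_)
        · have e1 : (1 : WithOne M) * σ₁ (of x) =
              (((1 : M) * FreeMonoid.lift f (of x) : M) : WithOne M) := by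
            rw [one_mul, one_mul]; rfl
          rw [e1]
          exact lpath_coe f hp
        · have e2 : (((1 : M) * FreeMonoid.lift f (of y) : M) : WithOne M) =
              (1 : WithOne M) * σ₁ (of y) := by
            rw [one_mul, one_mul]; rfl
          rw [e2]
          exact LPath.cons (LStep.negW 1 y) (LPath.nil 1)
    · exact LPath.nil 1
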